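/- If f : ℝ^m → ℝ is differentiable with L-Lipschitz continuous gradient, then for all x, y: (∇f(x) − ∇f(y))ᵀ(x − y) ≥ (1/L)‖∇f(x) − ∇f(y)‖₂² (cocoercivity of the gradient). -/

import Mathlib

open scoped InnerProductSpace

variable {m : ℕ}
local notation "E" => EuclideanSpace ℝ (Fin m)

-- chain rule along line
lemma chain (f : E → ℝ) (gp x v : E) (t : ℝ) (hg : HasGradientAt f gp (x + t • v)) :
    HasDerivAt (fun s : ℝ => f (x + s • v)) ⟪gp, v⟫_ℝ t := by
  have hc : HasDerivAt (fun s : ℝ => x + s • v) v t :=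
    by simpa using ((hasDerivAt_id t).smul_const v).const_add x
  have h1 := (hasGradientAt_iff_hasFDerivAt.mp hg).comp_hasDerivAt t hc
  exact h1

lemma descent (f : E → ℝ) (g : E → E) (L : ℝ) (hL : 0 < L)
    (hgrad : ∀ x, HasGradientAt f (g x) x)
    (hlip : ∀ x y, ‖g x - g y‖ ≤ L * ‖x - y‖) (x y : E) :
    f y ≤ f x + ⟪g x, y - x⟫_ℝ + L / 2 * ‖y - x‖ ^ 2 := by
  set v := y - x with hv
  have hgcont : Continuous g := by
    refine (LipschitzWith.of_dist_le_mul (K := ⟨L, hL.le⟩) ?_).continuous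
    intro a b; rw [dist_eq_norm, dist_eq_norm]; exact hlip a b
  have hcont : Continuous fun t : ℝ => ⟪g (x + t • v), v⟫_ℝ := by
    exact (hgcont.comp (by continuity)).inner continuous_const
  have hder : ∀ t : ℝ, HasDerivAt (fun s : ℝ => f (x + s • v)) ⟪g (x + t • v), v⟫_ℝ t :=
    fun t => chain f _ x v t (hgrad _)
  have hint : ∫ t in (0:ℝ)..1, ⟪g (x + t • v), v⟫_ℝ = f (x + (1:ℝ) • v) - f (x + (0:ℝ) • v) :=
    intervalIntegral.integral_eq_sub_of_hasDerivAt (fun t _ => hder t)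
      (hcont.intervalIntegrable 0 1)
  have hbound : ∫ t in (0:ℝ)..1, ⟪g (x + t • v), v⟫_ℝ
      ≤ ∫ t in (0:ℝ)..1, (⟪g x, v⟫_ℝ + L * ‖v‖ ^ 2 * t) := by
    refine intervalIntegral.integral_mono_on (by norm_num)
      (hcont.intervalIntegrable 0 1) (by apply Continuous.intervalIntegrable; continuity) ?_
    intro t ht
    obtain ⟨ht0, ht1⟩ := Set.mem_Icc.mp ht
    have h1 : ⟪g (x + t • v) - g x, v⟫_ℝ ≤ ‖g (x + t • v) - g x‖ * ‖v‖ :=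
      real_inner_le_norm _ _
    have h2 : ‖g (x + t • v) - g x‖ ≤ L * (t * ‖v‖) := by
      have := hlip (x + t • v) x
      simpa [norm_smul, abs_of_nonneg ht0] using this
    have h3 : ‖g (x + t • v) - g x‖ * ‖v‖ ≤ L * (t * ‖v‖) * ‖v‖ :=
      mul_le_mul_of_nonneg_right h2 (norm_nonneg _)
    have h4 : ⟪g (x + t • v), v⟫_ℝ = ⟪g x, v⟫_ℝ + ⟪g (x + t • v) - g x, v⟫_ℝ := by
      rw [inner_sub_left]; ring
    rw [h4]; nlinarith [h1, h3]
  have hrhs : ∫ t in (0:ℝ)..1, (⟪g x, v⟫_ℝ + L * ‖v‖ ^ 2 * t)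
      = ⟪g x, v⟫_ℝ + L / 2 * ‖v‖ ^ 2 := by
    rw [intervalIntegral.integral_add (intervalIntegrable_const)
      (by apply Continuous.intervalIntegrable; continuity),
      intervalIntegral.integral_const_mul, integral_id]
    simp; ring
  have : f y - f x ≤ ⟪g x, v⟫_ℝ + L / 2 * ‖v‖ ^ 2 := by
    have hy : x + (1:ℝ) • v = y := by simp [hv]
    have hx : x + (0:ℝ) • v = x := by simp
    rw [hy, hx] at hint
    linarith [hbound.trans_eq hrhs, hint.symm.le, hint.le]
  linarith

lemma foc (f : E → ℝ) (g : E → E) (hconv : ConvexOn ℝ Set.univ f)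
    (hgrad : ∀ x, HasGradientAt f (g x) x) (x z : E) :
    f x + ⟪g x, z - x⟫_ℝ ≤ f z := by
  set v := z - x with hv
  have hconv1 : ConvexOn ℝ Set.univ (fun t : ℝ => f (x + t • v)) := by
    have h := hconv.comp_affineMap (AffineMap.lineMap x z)
    simp only [Set.preimage_univ] at h
    have e : (fun t : ℝ => f (x + t • v)) = f ∘ AffineMap.lineMap x z := by
      funext t; simp [Function.comp, AffineMap.lineMap_apply, hv, add_comm]
    rw [e]; exact h
  have hder0 : HasDerivAt (fun t : ℝ => f (x + t • v)) ⟪g x, v⟫_ℝ 0 := by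
    have := chain f (g (x + (0:ℝ) • v)) x v 0 (hgrad _)
    simpa using this
  have := hconv1.le_slope_of_hasDerivAt (Set.mem_univ (0:ℝ)) (Set.mem_univ (1:ℝ))
    (by norm_num) hder0
  have hs : slope (fun t : ℝ => f (x + t • v)) 0 1 = f z - f x := by
    simp [slope_def_field, hv]
  rw [hs] at this
  linarith

lemma grad_shift (f : E → ℝ) (g : E → E) (w : E)
    (hgrad : ∀ x, HasGradientAt f (g x) x) (z : E) :
    HasGradientAt (fun u => f u - ⟪w, u⟫_ℝ) (g z - w) z := by
  rw [hasGradientAt_iff_hasFDerivAt]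
  have h1 := hasGradientAt_iff_hasFDerivAt.mp (hgrad z)
  have h2 : HasFDerivAt (fun u : E => ⟪w, u⟫_ℝ) (InnerProductSpace.toDual ℝ E w) z :=
    (InnerProductSpace.toDual ℝ E w).hasFDerivAt
  have := h1.sub h2
  have e : InnerProductSpace.toDual ℝ E (g z - w)
      = InnerProductSpace.toDual ℝ E (g z) - InnerProductSpace.toDual ℝ E w := map_sub _ _ _
  rw [e]; exact this

lemma lower (f : E → ℝ) (g : E → E) (L : ℝ) (hL : 0 < L)
    (hconv : ConvexOn ℝ Set.univ f)
    (hgrad : ∀ x, HasGradientAt f (g x) x)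
    (hlip : ∀ x y, ‖g x - g y‖ ≤ L * ‖x - y‖) (x y : E) :
    f x + ⟪g x, y - x⟫_ℝ + 1 / (2 * L) * ‖g y - g x‖ ^ 2 ≤ f y := by
  set F : E → ℝ := fun u => f u - ⟪g x, u⟫_ℝ with hF
  set G : E → E := fun u => g u - g x with hG
  have hFgrad : ∀ z, HasGradientAt F (G z) z := fun z => grad_shift f g (g x) hgrad z
  have hFlip : ∀ a b, ‖G a - G b‖ ≤ L * ‖a - b‖ := by
    intro a b; simpa [hG, sub_sub_sub_cancel_right] using hlip a b
  have hFconv : ConvexOn ℝ Set.univ F := by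
    apply hconv.sub
    exact ⟨convex_univ, by intro a _ b _ p q _ _ _; simp [inner_add_right, inner_smul_right]⟩
  set z : E := y - L⁻¹ • G y with hz
  have h1 : F z ≤ F y + ⟪G y, z - y⟫_ℝ + L / 2 * ‖z - y‖ ^ 2 :=
    descent F G L hL hFgrad hFlip y z
  have hzy : z - y = -(L⁻¹ • G y) := by rw [hz]; abel
  have hi : ⟪G y, z - y⟫_ℝ = -(L⁻¹ * ‖G y‖ ^ 2) := by
    rw [hzy, inner_neg_right, real_inner_smul_right, real_inner_self_eq_norm_sq]
  have hn : ‖z - y‖ ^ 2 = L⁻¹ ^ 2 * ‖G y‖ ^ 2 := by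
    rw [hzy, norm_neg, norm_smul, mul_pow]
    simp [abs_of_pos (inv_pos.mpr hL)]
  have h2 : F x ≤ F z := by
    have := foc F G hFconv hFgrad x z
    have hGx : G x = 0 := by simp [hG]
    simpa [hGx] using this
  have key : F x ≤ F y - 1 / (2 * L) * ‖G y‖ ^ 2 := by
    rw [hi, hn] at h1
    have hL' : L ≠ 0 := ne_of_gt hL
    calc F x ≤ F z := h2
      _ ≤ F y + -(L⁻¹ * ‖G y‖ ^ 2) + L / 2 * (L⁻¹ ^ 2 * ‖G y‖ ^ 2) := h1
      _ = F y - 1 / (2 * L) * ‖G y‖ ^ 2 := by field_simp; ring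
  have hFexp : F x = f x - ⟪g x, x⟫_ℝ := rfl
  have hFey : F y = f y - ⟪g x, y⟫_ℝ := rfl
  have hinner : ⟪g x, y - x⟫_ℝ = ⟪g x, y⟫_ℝ - ⟪g x, x⟫_ℝ := inner_sub_right _ _ _
  rw [hFexp, hFey] at key
  rw [hinner]
  simp only [hG] at key
  linarith

theorem stmt2 (m : ℕ) (f : EuclideanSpace ℝ (Fin m) → ℝ)
    (g : EuclideanSpace ℝ (Fin m) → EuclideanSpace ℝ (Fin m))
    (L : ℝ) (hL : 0 < L)
    (hconv : ConvexOn ℝ Set.univ f)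
    (hgrad : ∀ x, HasGradientAt f (g x) x)
    (hlip : ∀ x y, ‖g x - g y‖ ≤ L * ‖x - y‖) :
    ∀ x y, (1 / L) * ‖g x - g y‖ ^ 2 ≤ ⟪g x - g y, x - y⟫_ℝ := by
  intro x y
  have h1 := lower f g L hL hconv hgrad hlip x y
  have h2 := lower f g L hL hconv hgrad hlip y x
  have hn : ‖g y - g x‖ = ‖g x - g y‖ := norm_sub_rev _ _
  have hi : ⟪g x, y - x⟫_ℝ + ⟪g y, x - y⟫_ℝ = -⟪g x - g y, x - y⟫_ℝ := by
    rw [inner_sub_left]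
    have : ⟪g y, x - y⟫_ℝ = -⟪g y, y - x⟫_ℝ := by
      rw [← inner_neg_right]; congr 1; abel
    rw [this]
    have : ⟪g x, y - x⟫_ℝ = -⟪g x, x - y⟫_ℝ := by
      rw [← inner_neg_right]; congr 1; abel
    rw [this]; ring
  rw [hn] at h1
  have hL' : L ≠ 0 := ne_of_gt hL
  have : 2 * (1 / (2 * L)) = 1 / L := by field_simp
  nlinarith [h1, h2, hi]
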